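/- Let Z > 0, let μ ∈ ℝ with 0 < |μ| ≤ 1, and let f : ℝ → ℝ be continuously differentiable on [0, Z]. Then |μ| · f(0)² ≤ (2/(1 − e^{−Z})) · ( ∫₀^Z f(z)² dz + ∫₀^Z μ² f'(z)² dz ). -/

import Mathlib

open intervalIntegral

/-- single-direction trace inequality (Lemma 1 for a fixed direction μ). -/
theorem stmt_11 (Z : ℝ) (hZ : 0 < Z) (μ : ℝ) (hμ0 : 0 < |μ|) (hμ1 : |μ| ≤ 1)
    (f f' : ℝ → ℝ) (hf : ∀ z ∈ Set.Icc 0 Z, HasDerivAt f (f' z) z)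
    (hf' : ContinuousOn f' (Set.Icc 0 Z)) :
    |μ| * f 0 ^ 2 ≤ 2 / (1 - Real.exp (-Z)) *
      ((∫ z in (0 : ℝ)..Z, f z ^ 2) + ∫ z in (0 : ℝ)..Z, μ ^ 2 * f' z ^ 2) := by
  have hZ0 : (0:ℝ) ≤ Z := hZ.le
  have huI : Set.uIcc (0:ℝ) Z = Set.Icc 0 Z := Set.uIcc_of_le hZ0
  have hfc : ContinuousOn f (Set.Icc 0 Z) := fun z hz =>
    (hf z hz).continuousAt.continuousWithinAt
  set A : ℝ := ∫ z in (0:ℝ)..Z, f z ^ 2 with hA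
  set B : ℝ := ∫ z in (0:ℝ)..Z, μ ^ 2 * f' z ^ 2 with hB
  set C : ℝ := ∫ t in (0:ℝ)..Z, 2 * |f t * f' t| with hC
  -- integrability
  have hgc : ContinuousOn (fun t => 2 * |f t * f' t|) (Set.Icc 0 Z) :=
    (continuousOn_const.mul (hfc.mul hf').abs)
  have hCint : IntervalIntegrable (fun t => 2 * |f t * f' t|) MeasureTheory.volume 0 Z := by
    apply ContinuousOn.intervalIntegrable; rwa [huI]
  have hAint : IntervalIntegrable (fun z => f z ^ 2) MeasureTheory.volume 0 Z := by
    apply ContinuousOn.intervalIntegrable; rw [huI]; exact hfc.pow 2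
  have hBint : IntervalIntegrable (fun z => μ ^ 2 * f' z ^ 2) MeasureTheory.volume 0 Z := by
    apply ContinuousOn.intervalIntegrable; rw [huI]; exact continuousOn_const.mul (hf'.pow 2)
  have hC0 : 0 ≤ C := by
    apply intervalIntegral.integral_nonneg hZ0
    intro t _; positivity
  have hB0 : 0 ≤ B := by
    apply intervalIntegral.integral_nonneg hZ0
    intro t _; positivity
  -- key pointwise bound
  have key : ∀ z ∈ Set.Icc 0 Z, f 0 ^ 2 ≤ f z ^ 2 + C := by
    intro z hz
    have hz0 : (0:ℝ) ≤ z := hz.1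
    have hsub : Set.uIcc (0:ℝ) z ⊆ Set.Icc 0 Z := by
      rw [Set.uIcc_of_le hz0]; exact Set.Icc_subset_Icc le_rfl hz.2
    have hftc : (∫ t in (0:ℝ)..z, 2 * f t * f' t) = f z ^ 2 - f 0 ^ 2 := by
      apply intervalIntegral.integral_eq_sub_of_hasDerivAt
      · intro t ht
        have h := (hf t (hsub ht)).pow 2
        norm_num at h
        convert h using 1
        try ring
        all_goals rfl
      · apply ContinuousOn.intervalIntegrable
        exact ((continuousOn_const.mul (hfc.mono hsub)).mul (hf'.mono hsub))
    have habs : |∫ t in (0:ℝ)..z, 2 * f t * f' t| ≤ ∫ t in (0:ℝ)..z, 2 * |f t * f' t| := by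
      calc |∫ t in (0:ℝ)..z, 2 * f t * f' t|
          ≤ ∫ t in (0:ℝ)..z, |2 * f t * f' t| :=
            intervalIntegral.abs_integral_le_integral_abs hz0
        _ = ∫ t in (0:ℝ)..z, 2 * |f t * f' t| := by
            congr 1; funext t
            rw [abs_mul, abs_mul, abs_two, mul_assoc, ← abs_mul]
    have hmono : (∫ t in (0:ℝ)..z, 2 * |f t * f' t|) ≤ C := by
      apply intervalIntegral.integral_mono_interval le_rfl hz0 hz.2
      · filter_upwards with t
        positivity
      · exact hCint
    nlinarith [abs_nonneg (∫ t in (0:ℝ)..z, 2 * f t * f' t),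
        le_abs_self (-(∫ t in (0:ℝ)..z, 2 * f t * f' t)), abs_neg (∫ t in (0:ℝ)..z, 2 * f t * f' t)]
  -- exp integral
  have hexp : (∫ z in (0:ℝ)..Z, Real.exp (-z)) = 1 - Real.exp (-Z) := by
    rw [intervalIntegral.integral_comp_neg (fun x => Real.exp x)]
    simp [integral_exp]
  have hd : 0 < 1 - Real.exp (-Z) := by
    have : Real.exp (-Z) < 1 := Real.exp_lt_one_iff.mpr (by linarith)
    linarith
  -- integrability of weighted functions
  have hct : Continuous (fun z : ℝ => Real.exp (-z)) := Real.continuous_exp.comp continuous_neg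
  have hint1 : IntervalIntegrable (fun z => |μ| * (Real.exp (-z) * f z ^ 2))
      MeasureTheory.volume 0 Z := by
    apply ContinuousOn.intervalIntegrable; rw [huI]
    exact continuousOn_const.mul (hct.continuousOn.mul (hfc.pow 2))
  have hint2 : IntervalIntegrable (fun z => Real.exp (-z) * (|μ| * C))
      MeasureTheory.volume 0 Z := (hct.mul continuous_const).intervalIntegrable 0 Z
  -- weighted integral inequality
  have step1 : (1 - Real.exp (-Z)) * (|μ| * f 0 ^ 2) ≤
      (∫ z in (0:ℝ)..Z, (|μ| * (Real.exp (-z) * f z ^ 2) + Real.exp (-z) * (|μ| * C))) := by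
    have hlhs : (∫ z in (0:ℝ)..Z, Real.exp (-z) * (|μ| * f 0 ^ 2))
        = (1 - Real.exp (-Z)) * (|μ| * f 0 ^ 2) := by
      rw [intervalIntegral.integral_mul_const, hexp]
    rw [← hlhs]
    apply intervalIntegral.integral_mono_on hZ0
    · exact (hct.mul continuous_const).intervalIntegrable 0 Z
    · exact hint1.add hint2
    · intro z hz
      have h1 := key z hz
      have he : 0 < Real.exp (-z) := Real.exp_pos _
      have := hμ0
      nlinarith [mul_le_mul_of_nonneg_left h1 (abs_nonneg μ)]
  have step2 : (∫ z in (0:ℝ)..Z, (|μ| * (Real.exp (-z) * f z ^ 2) + Real.exp (-z) * (|μ| * C)))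
      = (∫ z in (0:ℝ)..Z, |μ| * (Real.exp (-z) * f z ^ 2)) + (1 - Real.exp (-Z)) * (|μ| * C) := by
    rw [intervalIntegral.integral_add hint1 hint2, intervalIntegral.integral_mul_const, hexp]
  have step3 : (∫ z in (0:ℝ)..Z, |μ| * (Real.exp (-z) * f z ^ 2)) ≤ A := by
    apply intervalIntegral.integral_mono_on hZ0 hint1 hAint
    intro z hz
    have he1 : Real.exp (-z) ≤ 1 := Real.exp_le_one_iff.mpr (by linarith [hz.1])
    have he0 : 0 < Real.exp (-z) := Real.exp_pos _
    calc |μ| * (Real.exp (-z) * f z ^ 2) ≤ 1 * (Real.exp (-z) * f z ^ 2) :=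
          mul_le_mul_of_nonneg_right hμ1 (mul_nonneg he0.le (sq_nonneg _))
      _ = Real.exp (-z) * f z ^ 2 := one_mul _
      _ ≤ 1 * f z ^ 2 := mul_le_mul_of_nonneg_right he1 (sq_nonneg _)
      _ = f z ^ 2 := one_mul _
  have step4 : |μ| * C ≤ A + B := by
    have : |μ| * C = ∫ t in (0:ℝ)..Z, |μ| * (2 * |f t * f' t|) := by
      rw [hC, ← intervalIntegral.integral_const_mul]
    rw [this, ← intervalIntegral.integral_add hAint hBint]
    apply intervalIntegral.integral_mono_on hZ0
    · exact hCint.const_mul _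
    · exact hAint.add hBint
    · intro t _
      have h1 : |f t * f' t| = |f t| * |f' t| := abs_mul _ _
      have h2 : μ ^ 2 = |μ| ^ 2 := (sq_abs μ).symm
      simp only [h1]
      nlinarith [sq_nonneg (|f t| - |μ| * |f' t|), sq_abs (f t), sq_abs (f' t),
        abs_nonneg (f t), abs_nonneg (f' t), abs_nonneg μ]
  have step5 : (1 - Real.exp (-Z)) * (|μ| * C) ≤ A + B := by
    have hmc : 0 ≤ |μ| * C := mul_nonneg (abs_nonneg μ) hC0
    nlinarith [Real.exp_pos (-Z)]
  have main : (1 - Real.exp (-Z)) * (|μ| * f 0 ^ 2) ≤ 2 * (A + B) := by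
    have h6 : (∫ z in (0:ℝ)..Z, (|μ| * (Real.exp (-z) * f z ^ 2) + Real.exp (-z) * (|μ| * C)))
        ≤ 2 * (A + B) := by
      rw [step2]; linarith
    linarith [step1, h6]
  rw [div_mul_eq_mul_div, le_div_iff₀ hd]
  linarith [main]
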